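/- Let B, C be real numbers with |B| ≤ C and C − B > 0, and set F(y) = By + C (so F ≥ 0 on [-1,1] and F(-1) > 0). There exists a constant c > 0 depending only on B, C such that for every C² function σ : [-1,1] → ℂ with σ(-1) = σ(1) = 0, one has ∫₋₁¹|σ'(y)|²dy ≤ c·∫₋₁¹F(y)|σ''(y)|²dy. -/

import Mathlib

open MeasureTheory intervalIntegral

section aux

lemma amgm_point (k Fv a b E oy : ℝ) (hk : 0 < k) (hoy : 0 ≤ oy)
    (hFv : k * oy ≤ Fv) (ha : 0 ≤ a) (hb : 0 ≤ b) (hE : 0 ≤ E)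
    (ha2 : a ^ 2 ≤ oy * E) :
    a * b ≤ E / 4 + Fv * b ^ 2 / k := by
  have hFv0 : 0 ≤ Fv := le_trans (by positivity) hFv
  rcases eq_or_lt_of_le hoy with h0 | h0
  · have ha0 : a = 0 := by nlinarith
    rw [ha0, zero_mul]
    positivity
  · have hFvpos : 0 < Fv := lt_of_lt_of_le (by positivity) hFv
    rw [div_add_div _ _ (by norm_num : (4:ℝ) ≠ 0) hk.ne', le_div_iff₀ (by positivity)]
    nlinarith [sq_nonneg (a * k - 2 * Fv * b),
      mul_le_mul_of_nonneg_left ha2 (mul_nonneg hk.le hk.le),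
      mul_le_mul_of_nonneg_left hFv (mul_nonneg hE hk.le)]

lemma re_star_mul (z : ℂ) : (star z * z).re = ‖z‖ ^ 2 := by
  rw [Complex.star_def, mul_comm, Complex.mul_conj, Complex.ofReal_re,
    Complex.normSq_eq_norm_sq]

end aux

/-- Weighted inequality (cf. \eqref{911a} in the paper, case `A = 0`): for the affine weight
`F(y) = By + C` with `|B| ≤ C` and `C − B > 0`, there is `c > 0` depending only on `B, C`
such that every `C²` function `σ` with `σ(±1) = 0` satisfies
`∫|σ'|² ≤ c·∫F|σ''|²`. -/
theorem stmt_3 (B C : ℝ) (hBC : |B| ≤ C) (hCB : 0 < C - B) :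
    ∃ c > 0, ∀ σ : ℝ → ℂ, ContDiff ℝ 2 σ → σ (-1) = 0 → σ 1 = 0 →
      (∫ y in (-1 : ℝ)..1, ‖deriv σ y‖ ^ 2)
        ≤ c * ∫ y in (-1 : ℝ)..1, (B * y + C) * ‖iteratedDeriv 2 σ y‖ ^ 2 := by
  set k : ℝ := (C - B) / 2 with hk
  have hk0 : 0 < k := by positivity
  have hBC' : 0 ≤ B + C := by
    have := (abs_le.mp hBC).1
    linarith
  -- the affine weight dominates k * (1 - y) on [-1, 1]
  have hFk : ∀ y ∈ Set.Icc (-1 : ℝ) 1, k * (1 - y) ≤ B * y + C := by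
    intro y hy
    obtain ⟨hy1, hy2⟩ := hy
    nlinarith
  refine ⟨2 / k, by positivity, ?_⟩
  intro σ hσ hm hp
  -- basic differentiability facts
  have hσ1 : ContDiff ℝ 1 (deriv σ) := by
    have h2 : ContDiff ℝ (1 + 1) σ := by norm_num; exact hσ
    exact (contDiff_succ_iff_deriv.mp h2).2.2
  have hd1 : Differentiable ℝ σ := hσ.differentiable (by norm_num)
  have hd2 : Differentiable ℝ (deriv σ) := hσ1.differentiable (by norm_num)
  have cσ : Continuous σ := hσ.continuous
  have cσ' : Continuous (deriv σ) := hd2.continuous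
  have cσ'' : Continuous (deriv (deriv σ)) := hσ1.continuous_deriv le_rfl
  have hiter : iteratedDeriv 2 σ = deriv (deriv σ) := by
    rw [iteratedDeriv_succ, iteratedDeriv_one]
  rw [hiter]
  set E : ℝ := ∫ y in (-1 : ℝ)..1, ‖deriv σ y‖ ^ 2 with hE
  set J : ℝ := ∫ y in (-1 : ℝ)..1, (B * y + C) * ‖deriv (deriv σ) y‖ ^ 2 with hJ
  have hE0 : 0 ≤ E :=
    intervalIntegral.integral_nonneg (by norm_num) (fun y _ => by positivity)
  have hJ0 : 0 ≤ J := by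
    refine intervalIntegral.integral_nonneg (by norm_num) (fun y hy => ?_)
    have h1 := hFk y hy
    have h2 : (0:ℝ) ≤ B * y + C := le_trans (by nlinarith [hy.1, hy.2]) h1
    positivity
  rcases eq_or_lt_of_le hE0 with hEz | hEpos
  · rw [← hEz]
    positivity
  -- pointwise bound ‖σ y‖² ≤ (1 - y) * E on [-1, 1]
  have hint2 : IntervalIntegrable (fun t => ‖deriv σ t‖ ^ 2) volume (-1) 1 :=
    ((cσ'.norm.pow 2).intervalIntegrable _ _)
  have hpt : ∀ y ∈ Set.Icc (-1 : ℝ) 1, ‖σ y‖ ^ 2 ≤ (1 - y) * E := by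
    intro y hy
    obtain ⟨hy1, hy2⟩ := hy
    rcases eq_or_lt_of_le hy2 with h1 | h1
    · rw [h1, hp]
      simp
    have hftc : ∫ t in y..1, deriv σ t = σ 1 - σ y := by
      refine intervalIntegral.integral_deriv_eq_sub (fun t _ => hd1 t) ?_
      exact cσ'.intervalIntegrable _ _
    have hσy : ‖σ y‖ ≤ ∫ t in y..1, ‖deriv σ t‖ := by
      have h := intervalIntegral.norm_integral_le_integral_norm (μ := volume)
        (f := deriv σ) (a := y) (b := 1) hy2
      rw [hftc, hp, zero_sub, norm_neg] at h
      exact h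
    set s : ℝ := Real.sqrt E with hs
    set u : ℝ := Real.sqrt (1 - y) with hu
    have hs0 : 0 < s := Real.sqrt_pos.mpr hEpos
    have hu0 : 0 < u := Real.sqrt_pos.mpr (by linarith)
    have hs2 : s ^ 2 = E := Real.sq_sqrt hE0
    have hu2 : u ^ 2 = 1 - y := Real.sq_sqrt (by linarith)
    set δ : ℝ := s / u with hδ
    have hδ0 : 0 < δ := div_pos hs0 hu0
    have hptw : ∀ t ∈ Set.Icc y 1, ‖deriv σ t‖ ≤ δ / 2 + ‖deriv σ t‖ ^ 2 / (2 * δ) := by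
      intro t _
      rw [div_add_div _ _ (by norm_num : (2:ℝ) ≠ 0) (by positivity),
        le_div_iff₀ (by positivity)]
      nlinarith [sq_nonneg (δ - ‖deriv σ t‖)]
    have hmono : (∫ t in y..1, ‖deriv σ t‖)
        ≤ ∫ t in y..1, (δ / 2 + ‖deriv σ t‖ ^ 2 / (2 * δ)) := by
      refine intervalIntegral.integral_mono_on hy2 ?_ ?_ hptw
      · exact (cσ'.norm.intervalIntegrable _ _)
      · exact ((continuous_const.add ((cσ'.norm.pow 2).div_const _)).intervalIntegrable _ _)
    have hsplit : (∫ t in y..1, (δ / 2 + ‖deriv σ t‖ ^ 2 / (2 * δ)))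
        = δ / 2 * (1 - y) + (∫ t in y..1, ‖deriv σ t‖ ^ 2) / (2 * δ) := by
      rw [intervalIntegral.integral_add (g := fun t => ‖deriv σ t‖ ^ 2 / (2 * δ))
        intervalIntegrable_const
        (((cσ'.norm.pow 2).div_const _).intervalIntegrable _ _),
        intervalIntegral.integral_const, intervalIntegral.integral_div]
      simp only [smul_eq_mul]
      ring
    have hEy : (∫ t in y..1, ‖deriv σ t‖ ^ 2) ≤ E := by
      refine intervalIntegral.integral_mono_interval hy1 hy2 le_rfl ?_ hint2
      filter_upwards with t
      positivity
    have hnorm : ‖σ y‖ ≤ s * u := by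
      have h3 : (∫ t in y..1, ‖deriv σ t‖ ^ 2) / (2 * δ) ≤ E / (2 * δ) := by
        gcongr
      have h4 : δ / 2 * (1 - y) + E / (2 * δ) = s * u := by
        rw [hδ, ← hs2, ← hu2]
        field_simp
        ring
      calc ‖σ y‖ ≤ ∫ t in y..1, ‖deriv σ t‖ := hσy
        _ ≤ δ / 2 * (1 - y) + (∫ t in y..1, ‖deriv σ t‖ ^ 2) / (2 * δ) := by
            rw [← hsplit]; exact hmono
        _ ≤ δ / 2 * (1 - y) + E / (2 * δ) := by linarith
        _ = s * u := h4
    calc ‖σ y‖ ^ 2 ≤ (s * u) ^ 2 := by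
          exact pow_le_pow_left₀ (norm_nonneg _) hnorm 2
      _ = (1 - y) * E := by rw [mul_pow, hs2, hu2]; ring
  -- integration by parts
  have hi1 : IntervalIntegrable (fun x => star (deriv σ x) * deriv σ x) volume (-1) 1 :=
    ((cσ'.star.mul cσ').intervalIntegrable _ _)
  have hi2 : IntervalIntegrable (fun x => star (σ x) * deriv (deriv σ) x) volume (-1) 1 :=
    ((cσ.star.mul cσ'').intervalIntegrable _ _)
  have hparts : (∫ x in (-1:ℝ)..1,
      (star (deriv σ x) * deriv σ x + star (σ x) * deriv (deriv σ) x)) = 0 := by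
    have h := intervalIntegral.integral_deriv_mul_eq_sub (a := (-1:ℝ)) (b := 1)
      (u := fun y => star (σ y)) (v := deriv σ)
      (u' := fun y => star (deriv σ y)) (v' := deriv (deriv σ))
      (fun x _ => ((hd1 x).hasDerivAt).star)
      (fun x _ => (hd2 x).hasDerivAt)
      (cσ'.star.intervalIntegrable _ _)
      (cσ''.intervalIntegrable _ _)
    simpa [hm, hp] using h
  have hsum : (∫ x in (-1:ℝ)..1, star (deriv σ x) * deriv σ x)
      = - ∫ x in (-1:ℝ)..1, star (σ x) * deriv (deriv σ) x := by
    rw [intervalIntegral.integral_add hi1 hi2] at hparts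
    exact eq_neg_of_add_eq_zero_left hparts
  have hreE : E = (∫ x in (-1:ℝ)..1, star (deriv σ x) * deriv σ x).re := by
    have h := Complex.reCLM.intervalIntegral_comp_comm hi1
    simp only [Complex.reCLM_apply] at h
    rw [hE, ← h]
    exact intervalIntegral.integral_congr fun x _ => (re_star_mul _).symm
  have hEle : E ≤ ∫ x in (-1:ℝ)..1, ‖σ x‖ * ‖deriv (deriv σ) x‖ := by
    calc E = (- ∫ x in (-1:ℝ)..1, star (σ x) * deriv (deriv σ) x).re := by
          rw [hreE, hsum]
      _ ≤ ‖- ∫ x in (-1:ℝ)..1, star (σ x) * deriv (deriv σ) x‖ := by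
          exact Complex.re_le_norm _
      _ = ‖∫ x in (-1:ℝ)..1, star (σ x) * deriv (deriv σ) x‖ := norm_neg _
      _ ≤ ∫ x in (-1:ℝ)..1, ‖star (σ x) * deriv (deriv σ) x‖ :=
          intervalIntegral.norm_integral_le_integral_norm (by norm_num)
      _ = ∫ x in (-1:ℝ)..1, ‖σ x‖ * ‖deriv (deriv σ) x‖ :=
          intervalIntegral.integral_congr fun x _ => by rw [norm_mul, norm_star]
  -- pointwise AM-GM with the weight
  have hfinal : (∫ x in (-1:ℝ)..1, ‖σ x‖ * ‖deriv (deriv σ) x‖)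
      ≤ E / 2 + J / k := by
    have hptw2 : ∀ y ∈ Set.Icc (-1:ℝ) 1, ‖σ y‖ * ‖deriv (deriv σ) y‖
        ≤ E / 4 + (B * y + C) * ‖deriv (deriv σ) y‖ ^ 2 / k := fun y hy =>
      amgm_point k _ _ _ E (1 - y) hk0 (by linarith [hy.2]) (hFk y hy)
        (norm_nonneg _) (norm_nonneg _) hE0 (hpt y hy)
    have hiL : IntervalIntegrable (fun x => ‖σ x‖ * ‖deriv (deriv σ) x‖) volume (-1) 1 :=
      ((cσ.norm.mul cσ''.norm).intervalIntegrable _ _)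
    have hcR : Continuous fun y => (B * y + C) * ‖deriv (deriv σ) y‖ ^ 2 :=
      ((continuous_const.mul continuous_id).add continuous_const).mul (cσ''.norm.pow 2)
    have hiR : IntervalIntegrable
        (fun y => E / 4 + (B * y + C) * ‖deriv (deriv σ) y‖ ^ 2 / k) volume (-1) 1 :=
      ((continuous_const.add (hcR.div_const _)).intervalIntegrable _ _)
    calc (∫ x in (-1:ℝ)..1, ‖σ x‖ * ‖deriv (deriv σ) x‖)
        ≤ ∫ y in (-1:ℝ)..1, (E / 4 + (B * y + C) * ‖deriv (deriv σ) y‖ ^ 2 / k) :=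
          intervalIntegral.integral_mono_on (by norm_num) hiL hiR hptw2
      _ = E / 2 + J / k := by
          rw [intervalIntegral.integral_add intervalIntegrable_const
            ((hcR.div_const _).intervalIntegrable _ _),
            intervalIntegral.integral_const, intervalIntegral.integral_div]
          rw [hJ]
          simp only [smul_eq_mul]
          ring
  have h2k : 2 / k * J = 2 * (J / k) := by ring
  linarith [hEle, hfinal]
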